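/- Let λ=(λ_1,...,λ_l) be a partition of length l. Then the polynomial s_λ([x_1]−[x_2]) in x_1, x_2 is not identically zero if and only if λ_i = 1 for all 2 ≤ i ≤ l, i.e., if and only if λ is a hook (λ = (λ_1, 1^{l−1})). -/

import Mathlib

open MvPolynomial

/-- The polynomial `p_n(t)` defined by `exp(Σ_{n≥1} t_n k^n) = Σ_{n≥0} p_n(t) k^n`,
as a polynomial in the variables `t_1, t_2, ...` (variable `X n` stands for `t_n`). -/
noncomputable def pS (n : ℕ) : MvPolynomial ℕ ℚ :=
  ∑ m ∈ Finset.range (n + 1), (Nat.factorial m : ℚ)⁻¹ •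
    ∑ c ∈ Finset.univ.filter
        (fun c : Fin m → Fin (n + 1) =>
          (∑ j, ((c j : ℕ))) = n ∧ ∀ j, 1 ≤ (c j : ℕ)),
      ∏ j, X ((c j : ℕ))

/-- `p_n` for `n : ℤ`, with `p_n = 0` for `n < 0`. -/
noncomputable def pz (n : ℤ) : MvPolynomial ℕ ℚ :=
  if 0 ≤ n then pS n.toNat else 0

/-- The Schur function `s_λ(t) = det(p_{λ_i - i + j})_{1 ≤ i,j ≤ l}` (here `0`-indexed). -/
noncomputable def schur {l : ℕ} (lam : Fin l → ℕ) : MvPolynomial ℕ ℚ :=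
  Matrix.det (Matrix.of fun a b : Fin l =>
    pz ((lam a : ℤ) - ((a : ℕ) : ℤ) + ((b : ℕ) : ℤ)))

/-- Substitution `t_n ↦ (x_1^n + ⋯ + x_k^n)/n`, i.e. `t = [x_1] + ⋯ + [x_k]`. -/
noncomputable def toPowerSums (k : ℕ) (f : MvPolynomial ℕ ℚ) : MvPolynomial (Fin k) ℚ :=
  aeval (fun n : ℕ => (n : ℚ)⁻¹ • ∑ i : Fin k, X i ^ n) f

/-- Iterated partial derivative `∂_{i_1} ⋯ ∂_{i_r}` for a list `L = [i_1, ..., i_r]`. -/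
noncomputable def derivs (L : List ℕ) (f : MvPolynomial ℕ ℚ) : MvPolynomial ℕ ℚ :=
  L.foldr (fun i g => pderiv i g) f

/-- The entries of a partition `λ` padded by zeros (`0`-indexed). -/
def pad {l : ℕ} (lam : Fin l → ℕ) (a : ℕ) : ℕ := if h : a < l then lam ⟨a, h⟩ else 0

/-- Substitution `t_n ↦ (x_1^n - x_2^n)/n`, i.e. `t = [x_1] - [x_2]`
(here `x_1 = X 0`, `x_2 = X 1`). -/
noncomputable def toDiff (f : MvPolynomial ℕ ℚ) : MvPolynomial (Fin 2) ℚ :=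
  aeval (fun n : ℕ => (n : ℚ)⁻¹ • (X 0 ^ n - X 1 ^ n)) f


namespace St12


open Finset

abbrev R := MvPolynomial (Fin 2) ℚ

noncomputable def y1 : R := X 0
noncomputable def y2 : R := X 1

noncomputable def qn : ℕ → R
  | 0 => 1
  | (k+1) => y1 ^ k * (y1 - y2)

noncomputable def q (m : ℤ) : R := if 0 ≤ m then qn m.toNat else 0

def S (m n : ℕ) : Finset (Fin m → ℕ) :=
  (Finset.Nat.antidiagonalTuple m n).filter fun c => ∀ j, 1 ≤ c j

lemma mem_S {m n : ℕ} {c : Fin m → ℕ} : c ∈ S m n ↔ (∑ j, c j) = n ∧ ∀ j, 1 ≤ c j := by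
  simp [S, Finset.Nat.mem_antidiagonalTuple]

lemma le_of_mem_S {m n : ℕ} {c : Fin m → ℕ} (hc : c ∈ S m n) (j : Fin m) : c j ≤ n := by
  obtain ⟨h1, _⟩ := mem_S.mp hc
  exact h1 ▸ Finset.single_le_sum (fun i _ => Nat.zero_le _) (Finset.mem_univ j)

lemma S_empty {m n : ℕ} (h : n < m) : S m n = ∅ := by
  apply Finset.eq_empty_of_forall_notMem
  intro c hc
  obtain ⟨h1, h2⟩ := mem_S.mp hc
  have : (m : ℕ) ≤ ∑ j, c j := by
    calc m = ∑ _j : Fin m, 1 := by simp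
    _ ≤ ∑ j, c j := Finset.sum_le_sum (fun j _ => h2 j)
  omega

lemma S_zero_empty {n : ℕ} (h : 1 ≤ n) : S 0 n = ∅ := by
  apply Finset.eq_empty_of_forall_notMem
  intro c hc
  obtain ⟨h1, _⟩ := mem_S.mp hc
  simp at h1
  omega

lemma pS_eq (n : ℕ) :
    pS n = ∑ m ∈ Finset.range (n+1), (Nat.factorial m : ℚ)⁻¹ • ∑ c ∈ S m n, ∏ j, X (c j) := by
  unfold pS
  refine Finset.sum_congr rfl fun m _ => ?_
  congr 1
  refine Finset.sum_nbij' (i := fun c j => ((c j : ℕ)))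
    (j := fun c j => (⟨min (c j) n, by omega⟩ : Fin (n+1))) ?_ ?_ ?_ ?_ ?_
  · intro c hc
    simp only [Finset.mem_filter, Finset.mem_univ, true_and] at hc
    exact mem_S.mpr hc
  · intro c hc
    have hle := le_of_mem_S hc
    obtain ⟨h1, h2⟩ := mem_S.mp hc
    simp only [Finset.mem_filter, Finset.mem_univ, true_and]
    constructor
    · rw [← h1]
      exact Finset.sum_congr rfl fun j _ => Nat.min_eq_left (h1 ▸ hle j)
    · intro j
      show 1 ≤ min (c j) n
      have := h2 j
      have := hle j
      omega
  · intro c _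
    funext j
    apply Fin.ext
    have := (c j).isLt
    simp only
    omega
  · intro c hc
    funext j
    show min (c j) n = c j
    exact Nat.min_eq_left (le_of_mem_S hc j)
  · intro c _
    rfl
lemma pS_zero : pS 0 = 1 := by
  rw [pS_eq]
  rw [Finset.sum_range_one]
  have : S 0 0 = {(fun j => 0 : Fin 0 → ℕ)} := by
    apply Finset.eq_singleton_iff_unique_mem.mpr
    constructor
    · apply mem_S.mpr; constructor <;> simp
    · intro c _; funext j; exact absurd j.isLt (by omega)
  rw [this]
  simp

lemma sum_S_comp {m n : ℕ} (σ : Equiv.Perm (Fin m)) (f : (Fin m → ℕ) → MvPolynomial ℕ ℚ) :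
    ∑ c ∈ S m n, f (c ∘ σ) = ∑ c ∈ S m n, f c := by
  refine Finset.sum_nbij' (i := fun c => c ∘ σ) (j := fun c => c ∘ σ.symm) ?_ ?_ ?_ ?_ ?_
  · intro c hc
    obtain ⟨h1, h2⟩ := mem_S.mp hc
    refine mem_S.mpr ⟨?_, fun j => h2 _⟩
    rw [← h1]
    exact Equiv.sum_comp σ c
  · intro c hc
    obtain ⟨h1, h2⟩ := mem_S.mp hc
    refine mem_S.mpr ⟨?_, fun j => h2 _⟩
    rw [← h1]
    exact Equiv.sum_comp σ.symm c
  · intro c _; funext j; simp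
  · intro c _; funext j; simp
  · intro c _; rfl

lemma last_split (m' n : ℕ) :
    ∑ c ∈ S (m'+1) n, ((c (Fin.last m') : ℚ)) • ∏ k, (X (c k) : MvPolynomial ℕ ℚ)
      = ∑ i ∈ Finset.range n, ∑ c' ∈ S m' (n - (i+1)),
          ((i+1 : ℕ) : ℚ) • (X (i+1) * ∏ k, X (c' k)) := by
  rw [Finset.sum_sigma' (Finset.range n) (fun i => S m' (n - (i+1)))]
  refine (Finset.sum_nbij' (i := fun (p : Σ _i : ℕ, (Fin m' → ℕ)) => Fin.snoc p.2 (p.1+1))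
    (j := fun c => ⟨c (Fin.last m') - 1, Fin.init c⟩) ?_ ?_ ?_ ?_ ?_).symm
  · rintro ⟨i, c'⟩ hp
    rw [Finset.mem_sigma] at hp
    obtain ⟨hi, hc'⟩ := hp
    dsimp only at hi hc' ⊢
    rw [Finset.mem_range] at hi
    obtain ⟨h1, h2⟩ := mem_S.mp hc'
    refine mem_S.mpr ⟨?_, ?_⟩
    · rw [Fin.sum_univ_castSucc]
      simp only [Fin.snoc_castSucc, Fin.snoc_last]
      rw [h1]
      have : i + 1 <= n := hi
      omega
    · intro j
      refine Fin.lastCases ?_ ?_ j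
      · simp
      · intro k; simpa using h2 k
  · intro c hc
    obtain ⟨h1, h2⟩ := mem_S.mp hc
    have hle := le_of_mem_S hc (Fin.last m')
    have hge := h2 (Fin.last m')
    rw [Finset.mem_sigma]
    constructor
    · dsimp only
      rw [Finset.mem_range]
      omega
    · dsimp only
      refine mem_S.mpr ⟨?_, fun k => h2 k.castSucc⟩
      rw [Fin.sum_univ_castSucc] at h1
      have h3 : ∑ k : Fin m', Fin.init c k = ∑ k : Fin m', c k.castSucc :=
        Finset.sum_congr rfl fun k _ => rfl
      rw [h3]
      clear h3 hc h2
      omega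
  · rintro ⟨i, c'⟩ _
    refine Sigma.ext ?_ ?_ <;> simp
  · intro c hc
    obtain ⟨_, h2⟩ := mem_S.mp hc
    have hge := h2 (Fin.last m')
    have : c (Fin.last m') - 1 + 1 = c (Fin.last m') := by omega
    simp only [this]
    exact Fin.snoc_init_self c
  · rintro ⟨i, c'⟩ _
    simp only [Fin.snoc_last]
    rw [Fin.prod_univ_castSucc]
    simp only [Fin.snoc_castSucc, Fin.snoc_last]
    rw [mul_comm]

lemma fact_inv_succ (m' : ℕ) :
    ((Nat.factorial (m'+1) : ℚ))⁻¹ * (((m'+1 : ℕ)) : ℚ) = ((Nat.factorial m' : ℚ))⁻¹ := by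
  have h1 : ((m' : ℚ) + 1) ≠ 0 := by positivity
  have h2 : (Nat.factorial m' : ℚ) ≠ 0 := Nat.cast_ne_zero.mpr (Nat.factorial_ne_zero _)
  rw [Nat.factorial_succ]
  push_cast
  field_simp

lemma key_step (n : ℕ) (m' : ℕ) :
    (n : ℚ) • ((Nat.factorial (m'+1) : ℚ)⁻¹ •
        ∑ c ∈ S (m'+1) n, ∏ j, (X (c j) : MvPolynomial ℕ ℚ))
      = (Nat.factorial m' : ℚ)⁻¹ • ∑ i ∈ Finset.range n, ∑ c' ∈ S m' (n-(i+1)),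
          ((i+1:ℕ) : ℚ) • (X (i+1) * ∏ k, X (c' k)) := by
  rw [← last_split m' n]
  rw [smul_comm]
  have h1 : (n:ℚ) • ∑ c ∈ S (m'+1) n, ∏ j, (X (c j) : MvPolynomial ℕ ℚ)
      = ∑ j : Fin (m'+1), ∑ c ∈ S (m'+1) n, ((c j : ℚ)) • ∏ k, X (c k) := by
    rw [Finset.smul_sum, Finset.sum_comm]
    refine Finset.sum_congr rfl fun c hc => ?_
    obtain ⟨hs, _⟩ := mem_S.mp hc
    rw [← Finset.sum_smul]
    congr 1
    rw [← hs]
    exact Nat.cast_sum _ _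
  have h2 : ∀ j : Fin (m'+1), ∑ c ∈ S (m'+1) n, ((c j : ℚ)) • ∏ k, (X (c k) : MvPolynomial ℕ ℚ)
      = ∑ c ∈ S (m'+1) n, ((c (Fin.last m') : ℚ)) • ∏ k, X (c k) := by
    intro j
    have hcomp := sum_S_comp (n := n) (Equiv.swap j (Fin.last m'))
      (fun c => ((c (Fin.last m') : ℚ)) • ∏ k, (X (c k) : MvPolynomial ℕ ℚ))
    rw [← hcomp]
    refine Finset.sum_congr rfl fun c hc => ?_
    simp only [Function.comp]
    rw [Equiv.swap_apply_right]
    congr 1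
    exact (Equiv.prod_comp (Equiv.swap j (Fin.last m')) (fun k => X (c k))).symm
  rw [h1, Finset.sum_congr rfl (fun j _ => h2 j), Finset.sum_const, Finset.card_univ,
    Fintype.card_fin, ← Nat.cast_smul_eq_nsmul ℚ, smul_smul, fact_inv_succ]

lemma pS_rec (n : ℕ) (hn : 1 ≤ n) :
    (n : ℚ) • pS n = ∑ i ∈ Finset.range n, ((i+1 : ℕ) : ℚ) • (X (i+1) * pS (n - (i+1))) := by
  have inner_eq : ∀ i ∈ Finset.range n,
      pS (n - (i+1)) = ∑ m' ∈ Finset.range n,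
        (Nat.factorial m' : ℚ)⁻¹ • ∑ c ∈ S m' (n-(i+1)), ∏ j, (X (c j) : MvPolynomial ℕ ℚ) := by
    intro i hi
    rw [Finset.mem_range] at hi
    rw [pS_eq]
    apply Finset.sum_subset
    · intro x hx
      rw [Finset.mem_range] at *
      omega
    · intro x _ hnx
      rw [Finset.mem_range] at hnx
      rw [S_empty (by omega)]
      simp
  rw [pS_eq n, Finset.smul_sum, Finset.sum_range_succ']
  rw [S_zero_empty hn]
  simp only [Finset.sum_empty, smul_zero, add_zero]
  rw [Finset.sum_congr rfl (fun m' _ => key_step n m')]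
  simp only [Finset.smul_sum]
  rw [Finset.sum_comm]
  refine Finset.sum_congr rfl fun i hi => ?_
  rw [inner_eq i hi]
  simp only [Finset.mul_sum, Finset.smul_sum]
  refine Finset.sum_congr rfl fun m' _ => ?_
  refine Finset.sum_congr rfl fun c' _ => ?_
  simp only [smul_eq_C_mul]
  ring

lemma qn_rec (N : ℕ) :
    ∑ i ∈ Finset.range (N+1), (y1^(i+1) - y2^(i+1)) * qn (N - i)
      = (((N+1:ℕ)) : ℚ) • qn (N+1) := by
  rw [Finset.sum_range_succ]
  have e1 : ∀ i ∈ Finset.range N, (y1^(i+1) - y2^(i+1)) * qn (N - i)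
      = y1^(i+1) * y1^(N-i-1) * (y1 - y2) - y2^(i+1) * y1^(N-i-1) * (y1 - y2) := by
    intro i hi
    rw [Finset.mem_range] at hi
    obtain ⟨k, hk⟩ : ∃ k, N - i = k + 1 := ⟨N - i - 1, by omega⟩
    have hk2 : N - i - 1 = k := by omega
    rw [hk2, hk, qn]
    ring
  rw [Finset.sum_congr rfl e1, Finset.sum_sub_distrib]
  have e2 : ∀ i ∈ Finset.range N, y1^(i+1) * y1^(N-i-1) * (y1-y2) = y1^N * (y1-y2) := by
    intro i hi
    rw [Finset.mem_range] at hi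
    rw [← pow_add]
    congr 2
    omega
  rw [Finset.sum_congr rfl e2, Finset.sum_const, Finset.card_range]
  have e3 : ∑ i ∈ Finset.range N, y2^(i+1) * y1^(N-i-1) * (y1-y2) = y2 * (y1^N - y2^N) := by
    have h := geom_sum₂_mul y2 y1 N
    calc ∑ i ∈ Finset.range N, y2^(i+1) * y1^(N-i-1) * (y1-y2)
        = -((∑ i ∈ Finset.range N, y2^i * y1^(N-1-i)) * (y2 - y1) * y2) := by
          rw [Finset.sum_mul, Finset.sum_mul, ← Finset.sum_neg_distrib]
          refine Finset.sum_congr rfl fun i hi => ?_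
          have h4 : N - i - 1 = N - 1 - i := by omega
          rw [← h4]
          ring
      _ = y2 * (y1^N - y2^N) := by rw [h]; ring
  rw [e3, Nat.sub_self]
  rw [show qn 0 = 1 from rfl, show qn (N+1) = y1^N * (y1-y2) from rfl]
  rw [nsmul_eq_mul, smul_eq_C_mul]
  push_cast [map_add, map_one, MvPolynomial.C_eq_coe_nat]
  ring

lemma toDiff_pS (n : ℕ) : toDiff (pS n) = qn n := by
  induction n using Nat.strong_induction_on with
  | _ n ih =>
    match n with
    | 0 =>
      rw [pS_zero, qn]
      simp [toDiff]
    | (N+1) =>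
      have hrec := congrArg toDiff (pS_rec (N+1) (by omega))
      unfold toDiff at hrec
      simp only [map_smul, map_sum, map_mul, aeval_X] at hrec
      have hterm : ∀ i ∈ Finset.range (N+1),
          ((i+1:ℕ) : ℚ) • (((i+1:ℕ) : ℚ)⁻¹ • ((X 0 : R) ^ (i+1) - X 1 ^ (i+1)) *
            (aeval fun n : ℕ => (n : ℚ)⁻¹ • ((X 0 : R) ^ n - X 1 ^ n)) (pS (N+1 - (i+1))))
          = (y1^(i+1) - y2^(i+1)) * qn (N - i) := by
        intro i hi
        rw [Finset.mem_range] at hi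
        have h5 : N + 1 - (i+1) = N - i := by omega
        have h6 := ih (N - i) (by omega)
        unfold toDiff at h6
        rw [h5, h6]
        rw [smul_mul_assoc, smul_smul]
        rw [mul_inv_cancel₀ (by positivity)]
        rw [one_smul]
        rfl
      rw [Finset.sum_congr rfl hterm, qn_rec] at hrec
      have hN : (((N+1:ℕ)) : ℚ) ≠ 0 := by positivity
      have hN' : ((N:ℚ) + 1) ≠ 0 := by positivity
      have h7 := congrArg (fun x : R => (((N+1:ℕ)) : ℚ)⁻¹ • x) hrec
      simpa [toDiff, smul_smul, inv_mul_cancel₀ hN'] using h7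

lemma q_natCast (n : ℕ) : q (n : ℤ) = qn n := by
  unfold q
  rw [if_pos (by positivity)]
  simp

lemma toDiff_pz (m : ℤ) : toDiff (pz m) = q m := by
  unfold pz q
  split
  · rename_i h
    have : ((m.toNat : ℕ) : ℤ) = m := Int.toNat_of_nonneg h
    exact toDiff_pS m.toNat
  · simp [toDiff]

lemma q_neg {m : ℤ} (h : m < 0) : q m = 0 := by rw [q, if_neg (by omega)]

lemma q_zero : q 0 = 1 := by rw [q, if_pos le_rfl]; rfl

lemma q_one : q 1 = y1 - y2 := by
  rw [q, if_pos (by omega)]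
  show qn 1 = y1 - y2
  rw [qn]
  ring

lemma q_two_le {m : ℤ} (h : 2 ≤ m) : q m = y1 * q (m - 1) := by
  obtain ⟨k, hk⟩ : ∃ k : ℕ, m = (k : ℤ) + 2 := ⟨(m - 2).toNat, by omega⟩
  subst hk
  have h1 : ((k : ℤ) + 2) = ((k + 2 : ℕ) : ℤ) := by push_cast; ring
  have h2 : ((k : ℤ) + 2 - 1) = ((k + 1 : ℕ) : ℤ) := by push_cast; ring
  rw [h1, show ((k + 2 : ℕ) : ℤ) - 1 = ((k + 1 : ℕ) : ℤ) from by push_cast; ring,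
    q_natCast, q_natCast]
  show y1 ^ (k+1) * (y1 - y2) = y1 * (y1 ^ k * (y1 - y2))
  ring

lemma q_shift {m : ℤ} (h : 1 ≤ m) (d : ℕ) : q (m + d) = y1 ^ d * q m := by
  induction d with
  | zero => simp
  | succ d ih =>
    have : (m + (d + 1 : ℕ) : ℤ) = (m + d) + 1 := by push_cast; ring
    rw [this, q_two_le (by omega)]
    rw [show (m + d + 1 - 1 : ℤ) = m + d from by ring, ih]
    ring

lemma q_step (m : ℤ) :
    q m - y1 * q (m - 1) = if m = 0 then 1 else if m = 1 then -y2 else 0 := by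
  rcases lt_trichotomy m 0 with h | h | h
  · rw [q_neg h, q_neg (by omega), if_neg (by omega), if_neg (by omega)]
    ring
  · subst h
    rw [q_zero, q_neg (by omega), if_pos rfl]
    ring
  · rcases eq_or_lt_of_le (show (1:ℤ) ≤ m from h) with h1 | h1
    · obtain rfl : m = 1 := h1.symm
      rw [q_one, show (1:ℤ) - 1 = 0 from rfl, q_zero, if_neg (by omega), if_pos rfl]
      ring
    · rw [q_two_le (by omega), if_neg (by omega), if_neg (by omega)]
      ring

section Mat

variable {l : ℕ}

noncomputable def Mq (lam : Fin l → ℕ) : Matrix (Fin l) (Fin l) R :=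
  Matrix.of fun a b => q ((lam a : ℤ) - ((a : ℕ) : ℤ) + ((b : ℕ) : ℤ))

lemma toDiff_det (A : Matrix (Fin l) (Fin l) (MvPolynomial ℕ ℚ)) :
    toDiff A.det = (A.map toDiff).det := by
  exact
    RingHom.map_det ((aeval (fun n : ℕ => (n : ℚ)⁻¹ • ((X 0 : R) ^ n - X 1 ^ n))) :
      MvPolynomial ℕ ℚ →ₐ[ℚ] R).toRingHom A

lemma toDiff_schur (lam : Fin l → ℕ) : toDiff (schur lam) = (Mq lam).det := by
  rw [schur, toDiff_det]
  congr 1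
  apply Matrix.ext
  intro a b
  rw [Matrix.map_apply]
  simp only [Matrix.of_apply]
  rw [toDiff_pz]
  rfl

noncomputable def W : Matrix (Fin l) (Fin l) R :=
  Matrix.of fun c b => (if c = b then 1 else 0) + (if (c : ℕ) + 1 = (b : ℕ) then -y1 else 0)

lemma W_det : (W : Matrix (Fin l) (Fin l) R).det = 1 := by
  have ht : (W : Matrix (Fin l) (Fin l) R).BlockTriangular (id : Fin l → Fin l) := by
    intro i j hij
    simp only [id] at hij
    show (if i = j then (1:R) else 0) + (if (i : ℕ) + 1 = (j : ℕ) then -y1 else 0) = 0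
    have hv : (j : ℕ) < (i : ℕ) := hij
    rw [if_neg (by exact fun hh => by rw [hh] at hv; omega), if_neg (by omega)]
    ring
  rw [Matrix.det_of_upperTriangular ht]
  have : ∀ i : Fin l, W i i = 1 := by
    intro i
    show (if i = i then (1:R) else 0) + (if (i : ℕ) + 1 = (i : ℕ) then -y1 else 0) = 1
    rw [if_pos rfl, if_neg (by omega)]
    ring
  rw [Finset.prod_congr rfl (fun i _ => this i)]
  simp

noncomputable def P (lam : Fin l → ℕ) : Matrix (Fin l) (Fin l) R := Mq lam * W

lemma MqW (lam : Fin l → ℕ) (a b : Fin l) :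
    P lam a b
      = q ((lam a : ℤ) - (a : ℕ) + (b : ℕ))
        - (if (b : ℕ) = 0 then 0 else
            y1 * q ((lam a : ℤ) - ((a : ℕ) : ℤ) + ((b : ℕ) : ℤ) - 1)) := by
  rw [P, Matrix.mul_apply]
  have expand : ∀ c : Fin l, Mq lam a c * W c b
      = (if c = b then Mq lam a c else 0) + (if (c:ℕ) + 1 = (b:ℕ) then -y1 * Mq lam a c else 0) := by
    intro c
    show Mq lam a c * ((if c = b then (1:R) else 0) + (if (c : ℕ) + 1 = (b : ℕ) then -y1 else 0)) = _
    split <;> split <;> ring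
  rw [Finset.sum_congr rfl (fun c _ => expand c), Finset.sum_add_distrib]
  rw [Finset.sum_ite_eq' Finset.univ b (fun c => Mq lam a c), if_pos (Finset.mem_univ b)]
  rcases Nat.eq_zero_or_pos (b : ℕ) with hb | hb
  · rw [if_pos hb]
    have : ∀ c : Fin l, (if (c:ℕ) + 1 = (b:ℕ) then -y1 * Mq lam a c else 0) = 0 := by
      intro c
      rw [if_neg (by omega)]
    rw [Finset.sum_congr rfl (fun c _ => this c)]
    simp [Mq]
  · rw [if_neg (by omega)]
    set b' : Fin l := ⟨(b:ℕ) - 1, by omega⟩ with hb'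
    have : ∀ c : Fin l, (if (c:ℕ) + 1 = (b:ℕ) then -y1 * Mq lam a c else 0)
        = (if c = b' then -y1 * Mq lam a c else 0) := by
      intro c
      congr 1
      simp only [hb', Fin.ext_iff]
      rw [eq_iff_iff]
      omega
    rw [Finset.sum_congr rfl (fun c _ => this c)]
    rw [Finset.sum_ite_eq' Finset.univ b' (fun c => -y1 * Mq lam a c), if_pos (Finset.mem_univ b')]
    have hbv : ((b' : ℕ) : ℤ) = ((b : ℕ) : ℤ) - 1 := by
      simp only [hb']
      omega
    show Mq lam a b + -y1 * Mq lam a b' = _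
    unfold Mq
    simp only [Matrix.of_apply]
    rw [hbv]
    ring_nf

end Mat

lemma y_sub_ne : (y1 - y2 : R) ≠ 0 := by
  intro h
  have h2 := congrArg (MvPolynomial.eval (fun j : Fin 2 => if j = 0 then (1:ℚ) else 0)) h
  simp [y1, y2] at h2

section Mat2

variable {l : ℕ}

lemma P_entry (lam : Fin l → ℕ) (a b : Fin l) (hb : 1 ≤ (b : ℕ)) :
    P lam a b = (if (lam a : ℤ) - ((a : ℕ) : ℤ) + ((b : ℕ) : ℤ) = 0 then 1
      else if (lam a : ℤ) - ((a : ℕ) : ℤ) + ((b : ℕ) : ℤ) = 1 then -y2 else 0) := by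
  rw [MqW, if_neg (by omega)]
  exact q_step _

lemma det_hook (lam : Fin l → ℕ) (hl : 1 ≤ l) (hpos : ∀ i, 1 ≤ lam i)
    (hhook : ∀ i : Fin l, 1 ≤ (i : ℕ) → lam i = 1) :
    (Mq lam).det = q (lam ⟨0, hl⟩) * (-y2) ^ (l - 1) := by
  have hdet : (Mq lam).det = (P lam).det := by
    rw [P, Matrix.det_mul, W_det, mul_one]
  rw [hdet]
  have htri : (P lam).BlockTriangular (OrderDual.toDual : Fin l → (Fin l)ᵒᵈ) := by
    intro a b hab
    have hab' : (a : ℕ) < (b : ℕ) := hab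
    have hb : 1 ≤ (b : ℕ) := by omega
    rw [P_entry lam a b hb]
    rcases Nat.eq_zero_or_pos (a : ℕ) with ha | ha
    · have := hpos a
      rw [if_neg (by omega), if_neg (by omega)]
    · have := hhook a ha
      rw [if_neg (by omega), if_neg (by omega)]
  rw [Matrix.det_of_lowerTriangular _ htri]
  obtain ⟨l', rfl⟩ : ∃ l', l = l' + 1 := ⟨l - 1, by omega⟩
  rw [Fin.prod_univ_succ]
  have h0 : P lam 0 0 = q (lam 0) := by
    rw [MqW]
    have : ((0 : Fin (l'+1)) : ℕ) = 0 := rfl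
    rw [if_pos this]
    rw [this]
    norm_num
  have hs : ∀ i : Fin l', P lam i.succ i.succ = -y2 := by
    intro i
    have hb : 1 ≤ (i.succ : ℕ) := by simp [Fin.val_succ]
    have h1 : lam i.succ = 1 := hhook i.succ hb
    rw [P_entry lam i.succ i.succ hb, if_neg (by omega), if_pos (by omega)]
  rw [h0, Finset.prod_congr rfl (fun i _ => hs i), Finset.prod_const, Finset.card_univ,
    Fintype.card_fin]
  have : lam ⟨0, hl⟩ = lam 0 := rfl
  rw [this]
  norm_num

lemma det_nonhook (lam : Fin l → ℕ) (hl2 : 2 ≤ l)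
    (hle : lam ⟨1, by omega⟩ ≤ lam ⟨0, by omega⟩)
    (h2 : 2 ≤ lam ⟨1, by omega⟩) : (Mq lam).det = 0 := by
  set i0 : Fin l := ⟨0, by omega⟩ with hi0
  set i1 : Fin l := ⟨1, by omega⟩ with hi1
  set d : ℕ := lam i0 - lam i1 + 1 with hd
  have hrow : Mq lam i0 = y1 ^ d • Mq lam i1 := by
    funext b
    show q ((lam i0 : ℤ) - ((i0 : ℕ) : ℤ) + ((b : ℕ) : ℤ))
      = y1 ^ d • q ((lam i1 : ℤ) - ((i1 : ℕ) : ℤ) + ((b : ℕ) : ℤ))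
    have hv0 : ((i0 : ℕ) : ℤ) = 0 := rfl
    have hv1 : ((i1 : ℕ) : ℤ) = 1 := rfl
    have hq := q_shift (m := (lam i1 : ℤ) - 1 + ((b : ℕ) : ℤ)) (by omega) d
    have harg : (lam i0 : ℤ) - ((i0 : ℕ) : ℤ) + ((b : ℕ) : ℤ)
        = ((lam i1 : ℤ) - 1 + ((b : ℕ) : ℤ)) + (d : ℤ) := by
      rw [hv0, hd]
      push_cast
      omega
    rw [harg, hq, hv1]
    rw [smul_eq_mul]
  have step1 : (Mq lam).det = ((Mq lam).updateRow i0 (y1 ^ d • Mq lam i1)).det := by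
    rw [← hrow, Matrix.updateRow_eq_self]
  have hne : i0 ≠ i1 := by
    rw [hi0, hi1]
    simp [Fin.ext_iff]
  rw [step1, Matrix.det_updateRow_smul]
  have step2 : ((Mq lam).updateRow i0 (Mq lam i1)).det = 0 := by
    apply Matrix.det_zero_of_row_eq hne
    rw [Matrix.updateRow_self, Matrix.updateRow_ne (Ne.symm hne)]
  rw [step2, mul_zero]

end Mat2

end St12

/-- For a partition `λ` of length `l`, the polynomial
`s_λ([x_1] - [x_2])` is not identically zero iff `λ_i = 1` for all `2 ≤ i ≤ l`,
i.e. iff `λ` is a hook. -/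
theorem statement12 (l : ℕ) (hl : 1 ≤ l) (lam : Fin l → ℕ)
    (hanti : Antitone lam) (hpos : ∀ i, 1 ≤ lam i) :
    toDiff (schur lam) ≠ 0 ↔ ∀ i : Fin l, 1 ≤ (i : ℕ) → lam i = 1 := by
  rw [St12.toDiff_schur]
  constructor
  · intro hne i hi
    by_contra hne1
    have h2le : 2 ≤ lam i := by have := hpos i; omega
    have hl2 : 2 ≤ l := by have := i.isLt; omega
    have hi1 : (⟨1, by omega⟩ : Fin l) ≤ i := by
      rw [Fin.le_def]
      exact hi
    have h01 : (⟨0, by omega⟩ : Fin l) ≤ (⟨1, by omega⟩ : Fin l) := by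
      rw [Fin.le_def]
      exact Nat.zero_le _
    exact hne (St12.det_nonhook lam hl2 (hanti h01) (le_trans h2le (hanti hi1)))
  · intro hhook
    rw [St12.det_hook lam hl hpos hhook]
    apply mul_ne_zero
    · have h1 : 1 ≤ lam ⟨0, hl⟩ := hpos _
      obtain ⟨k, hk⟩ : ∃ k, lam ⟨0, hl⟩ = k + 1 := ⟨lam ⟨0, hl⟩ - 1, by omega⟩
      rw [hk, St12.q_natCast]
      show (St12.y1 ^ k * (St12.y1 - St12.y2) : St12.R) ≠ 0
      exact mul_ne_zero (pow_ne_zero _ (MvPolynomial.X_ne_zero _)) St12.y_sub_ne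
    · exact pow_ne_zero _ (neg_ne_zero.mpr (MvPolynomial.X_ne_zero _))
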